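/- For every integer d ≥ 2, a_0 = 1, a_{2d−4} = 1, and a_k ≥ 1 for every integer k with 0 ≤ k ≤ 2d−4. -/

import Mathlib

open Finset MeasureTheory

/-- `M d t = ∑_{k=0}^{d-1} C(d-1,k)² t^{2k}`. -/
noncomputable def M (d : ℕ) (t : ℝ) : ℝ :=
  ∑ k ∈ Finset.range d, ((d - 1).choose k : ℝ) ^ 2 * t ^ (2 * k)

/-- `A d t = ∑_{k=1}^{d-1} k² C(d-1,k)² t^{2(k-1)}`. -/
noncomputable def A (d : ℕ) (t : ℝ) : ℝ :=
  ∑ k ∈ Finset.Icc 1 (d - 1), (k : ℝ) ^ 2 * ((d - 1).choose k : ℝ) ^ 2 * t ^ (2 * (k - 1))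

/-- `B d t = ∑_{k=1}^{d-1} k C(d-1,k)² t^{2k-1}`. -/
noncomputable def B (d : ℕ) (t : ℝ) : ℝ :=
  ∑ k ∈ Finset.Icc 1 (d - 1), (k : ℝ) * ((d - 1).choose k : ℝ) ^ 2 * t ^ (2 * k - 1)

/-- The density `f d t = (1/π)·√(A_d(t)·M_d(t) − B_d(t)²) / M_d(t)`. -/
noncomputable def f (d : ℕ) (t : ℝ) : ℝ :=
  (1 / Real.pi) * Real.sqrt (A d t * M d t - (B d t) ^ 2) / M d t

/-- The coefficients `a_k`. -/
noncomputable def a (d k : ℕ) : ℝ :=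
  (∑ i ∈ Finset.range d, ∑ j ∈ Finset.range (d - 1),
      if i + j = k then ((d - 1).choose i : ℝ) ^ 2 * ((d - 2).choose j : ℝ) ^ 2 else 0)
  - (∑ i ∈ Finset.range (d - 1), ∑ j ∈ Finset.range (d - 1),
      if i + j + 1 = k then
        ((d - 2).choose i : ℝ) * ((d - 1).choose (i + 1) : ℝ) *
          ((d - 2).choose j : ℝ) * ((d - 1).choose (j + 1) : ℝ)
      else 0)

namespace Stmt2Aux

noncomputable def v (e k i : ℕ) : ℝ :=
  if i ≤ k then ((e+1).choose i : ℝ) * (e.choose (k-i) : ℝ) else 0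

lemma v_of_le {e k i : ℕ} (h : i ≤ k) :
    v e k i = ((e+1).choose i : ℝ) * (e.choose (k-i) : ℝ) := if_pos h

lemma v_of_gt {e k i : ℕ} (h : k < i) : v e k i = 0 := if_neg (by omega)

lemma v_of_big {e k i : ℕ} (h : e + 1 < i) : v e k i = 0 := by
  unfold v; split
  · simp [Nat.choose_eq_zero_of_lt h]
  · rfl

lemma v_of_far {e k i : ℕ} (h : i + e < k) : v e k i = 0 := by
  unfold v; split
  · have : e < k - i := by omega
    simp [Nat.choose_eq_zero_of_lt this]
  · rfl

lemma sum_shift (n : ℕ) (h : ℕ → ℝ) :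
    ∑ i ∈ range n, h (i+1) = ∑ m ∈ Icc 1 n, h m := by
  induction n with
  | zero => simp
  | succ n ih => rw [Finset.sum_range_succ, ih, Finset.sum_Icc_succ_top (by omega)]

lemma sum_ext {h : ℕ → ℝ} {m n : ℕ} (hmn : m ≤ n) (hz : ∀ i, m < i → h i = 0) :
    ∑ i ∈ Icc 1 n, h i = ∑ i ∈ Icc 1 m, h i := by
  refine (Finset.sum_subset (Finset.Icc_subset_Icc_right hmn) ?_).symm
  intro x hx hx'
  simp only [Finset.mem_Icc] at hx hx'
  exact hz x (by omega)

lemma S1_eq (e k : ℕ) :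
    (∑ i ∈ range (e+2), ∑ j ∈ range (e+1),
      if i + j = k then ((e+1).choose i : ℝ)^2 * ((e).choose j : ℝ)^2 else 0)
    = ∑ i ∈ range (e+2), (v e k i)^2 := by
  refine Finset.sum_congr rfl fun i _ => ?_
  by_cases hik : i ≤ k
  · by_cases hke : k - i ≤ e
    · rw [Finset.sum_eq_single (k - i)]
      · rw [if_pos (by omega), v_of_le hik]; ring
      · intro j hj hne; exact if_neg (by omega)
      · intro hmem; exact absurd (Finset.mem_range.mpr (by omega)) hmem
    · rw [Finset.sum_eq_zero, v_of_le hik]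
      · have h0 : (e.choose (k-i)) = 0 := Nat.choose_eq_zero_of_lt (by omega)
        simp [h0]
      · intro j hj; simp only [Finset.mem_range] at hj; exact if_neg (by omega)
  · rw [Finset.sum_eq_zero, v_of_gt (by omega)]
    · simp
    · intro j hj; exact if_neg (by omega)

lemma S2_eq (e k : ℕ) :
    (∑ i ∈ range (e+1), ∑ j ∈ range (e+1),
      if i + j + 1 = k then
        ((e).choose i : ℝ) * ((e+1).choose (i+1) : ℝ) *
          ((e).choose j : ℝ) * ((e+1).choose (j+1) : ℝ)
      else 0)
    = ∑ i ∈ range (e+1), v e k (i+1) * v e k (k - i) := by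
  refine Finset.sum_congr rfl fun i _ => ?_
  by_cases hik : i + 1 ≤ k
  · by_cases hke : k - i - 1 ≤ e
    · rw [Finset.sum_eq_single (k - i - 1)]
      · rw [if_pos (by omega), v_of_le hik, v_of_le (by omega : k - i ≤ k)]
        have h1 : k - (i+1) = k - i - 1 := by omega
        have h2 : k - (k - i) = i := by omega
        have h3 : (k - i - 1) + 1 = k - i := by omega
        rw [h1, h2, h3]; ring
      · intro j hj hne; exact if_neg (by omega)
      · intro hmem; exact absurd (Finset.mem_range.mpr (by omega)) hmem
    · rw [Finset.sum_eq_zero, v_of_le hik]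
      · have h0 : (e.choose (k - (i+1))) = 0 := Nat.choose_eq_zero_of_lt (by omega)
        simp [h0]
      · intro j hj; simp only [Finset.mem_range] at hj; exact if_neg (by omega)
  · rw [Finset.sum_eq_zero, v_of_gt (by omega)]
    · simp
    · intro j hj; exact if_neg (by omega)

lemma a_formula (e k : ℕ) :
    a (e+2) k = (v e k 0)^2
      + ∑ i ∈ Icc 1 k, ((v e k i)^2 - v e k i * v e k (k+1-i)) := by
  have hd1 : e + 2 - 1 = e + 1 := rfl
  have hd2 : e + 2 - 2 = e := rfl
  unfold a
  rw [hd1, hd2, S1_eq, S2_eq]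
  have e1 : ∑ i ∈ range (e+2), (v e k i)^2
      = (v e k 0)^2 + ∑ i ∈ Icc 1 k, (v e k i)^2 := by
    rw [Finset.sum_range_succ' (fun i => (v e k i)^2) (e+1),
      sum_shift (e+1) (fun m => (v e k m)^2)]
    have hA : ∑ m ∈ Icc 1 (max (e+1) k), (v e k m)^2 = ∑ m ∈ Icc 1 (e+1), (v e k m)^2 :=
      sum_ext (le_max_left _ _) (fun i hi => by rw [v_of_big hi]; ring)
    have hB : ∑ m ∈ Icc 1 (max (e+1) k), (v e k m)^2 = ∑ m ∈ Icc 1 k, (v e k m)^2 :=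
      sum_ext (le_max_right _ _) (fun i hi => by rw [v_of_gt hi]; ring)
    rw [← hA, hB]; ring
  have e2 : ∑ i ∈ range (e+1), v e k (i+1) * v e k (k - i)
      = ∑ m ∈ Icc 1 k, v e k m * v e k (k+1-m) := by
    have step : ∀ i : ℕ, v e k (i+1) * v e k (k - i)
        = v e k (i+1) * v e k (k+1-(i+1)) := by
      intro i; rw [Nat.succ_sub_succ]
    rw [Finset.sum_congr rfl fun i _ => step i,
      sum_shift (e+1) (fun m => v e k m * v e k (k+1-m))]
    have hA : ∑ m ∈ Icc 1 (max (e+1) k), v e k m * v e k (k+1-m)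
        = ∑ m ∈ Icc 1 (e+1), v e k m * v e k (k+1-m) :=
      sum_ext (le_max_left _ _) (fun i hi => by rw [v_of_big hi]; ring)
    have hB : ∑ m ∈ Icc 1 (max (e+1) k), v e k m * v e k (k+1-m)
        = ∑ m ∈ Icc 1 k, v e k m * v e k (k+1-m) :=
      sum_ext (le_max_right _ _) (fun i hi => by rw [v_of_gt hi]; ring)
    rw [← hA, hB]
  rw [e1, e2, Finset.sum_sub_distrib]; ring

lemma reflect (k : ℕ) (q : ℕ → ℝ) :
    ∑ i ∈ Icc 1 k, q (k+1-i) = ∑ i ∈ Icc 1 k, q i := by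
  rw [← sum_shift k (fun m => q (k+1-m)), ← sum_shift k q,
    ← Finset.sum_range_reflect (fun i => q (i+1)) k]
  refine Finset.sum_congr rfl fun i hi => ?_
  simp only [Finset.mem_range] at hi
  congr 1; omega

lemma two_a (e k : ℕ) :
    2 * a (e+2) k = 2*(v e k 0)^2 + ∑ i ∈ Icc 1 k, (v e k i - v e k (k+1-i))^2 := by
  rw [a_formula]
  have expand : ∑ i ∈ Icc 1 k, (v e k i - v e k (k+1-i))^2
      = ∑ i ∈ Icc 1 k, ((v e k i)^2 + (v e k (k+1-i))^2 - 2*(v e k i * v e k (k+1-i))) :=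
    Finset.sum_congr rfl fun i _ => by ring
  rw [expand]
  simp only [Finset.sum_sub_distrib, Finset.sum_add_distrib, ← Finset.mul_sum]
  rw [reflect k (fun m => (v e k m)^2)]
  ring

lemma a_zero (e : ℕ) : a (e+2) 0 = 1 := by
  rw [a_formula]
  simp [v]

lemma v_top1 (e k : ℕ) (h1 : e + 1 ≤ k) (h2 : k ≤ 2*e + 1) :
    v e k (e+1) = (e.choose (k - e - 1) : ℝ) := by
  rw [v_of_le h1, Nat.choose_self]
  rw [show k - (e+1) = k - e - 1 from by omega]
  ring

lemma v_top2 (e k : ℕ) (h1 : e ≤ k) (h2 : k ≤ 2*e) :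
    v e k (k - e) = ((e+1).choose (k - e) : ℝ) := by
  rw [v_of_le (by omega), show k - (k - e) = e from by omega, Nat.choose_self]
  ring

lemma delta (e k : ℕ) (h1 : e + 1 ≤ k) (h2 : k ≤ 2*e) :
    (1:ℝ) ≤ (v e k (e+1) - v e k (k - e))^2 := by
  obtain ⟨s, hs⟩ : ∃ s, k - e = s + 1 := ⟨k - e - 1, by omega⟩
  rw [v_top1 e k h1 (by omega), v_top2 e k (by omega) h2, hs,
    show s + 1 - 1 = s from rfl, Nat.choose_succ_succ]
  push_cast
  have hpos : 1 ≤ e.choose (s+1) := Nat.succ_le_of_lt (Nat.choose_pos (by omega))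
  have : (1:ℝ) ≤ (e.choose (s+1) : ℝ) := by exact_mod_cast hpos
  nlinarith [this]

lemma a_ge (e k : ℕ) (hk : k ≤ 2*e) : 1 ≤ a (e+2) k := by
  have h2 := two_a e k
  have hnn : (0:ℝ) ≤ ∑ i ∈ Icc 1 k, (v e k i - v e k (k+1-i))^2 :=
    Finset.sum_nonneg fun i _ => sq_nonneg _
  rcases le_or_gt k e with hke | hke
  · have hv0 : (1:ℝ) ≤ v e k 0 := by
      rw [v_of_le (Nat.zero_le k), Nat.choose_zero_right, Nat.cast_one, one_mul,
        Nat.sub_zero]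
      exact_mod_cast Nat.succ_le_of_lt (Nat.choose_pos hke)
    nlinarith [hv0, hnn, h2]
  · -- e < k ≤ 2e
    have hv0 : v e k 0 = 0 := v_of_far (by omega)
    have hne : k - e ≠ e + 1 := by omega
    have hsub : ({k - e, e + 1} : Finset ℕ) ⊆ Icc 1 k := by
      intro x hx
      simp only [Finset.mem_insert, Finset.mem_singleton] at hx
      rcases hx with rfl | rfl <;> simp only [Finset.mem_Icc] <;> omega
    have hpair : ∑ i ∈ ({k - e, e + 1} : Finset ℕ), (v e k i - v e k (k+1-i))^2
        ≤ ∑ i ∈ Icc 1 k, (v e k i - v e k (k+1-i))^2 :=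
      Finset.sum_le_sum_of_subset_of_nonneg hsub (fun i _ _ => sq_nonneg _)
    rw [Finset.sum_pair hne] at hpair
    have r1 : k + 1 - (k - e) = e + 1 := by omega
    have r2 : k + 1 - (e + 1) = k - e := by omega
    rw [r1, r2] at hpair
    have hδ := delta e k (by omega) hk
    have hδ' : (1:ℝ) ≤ (v e k (k - e) - v e k (e+1))^2 := by
      rw [show (v e k (k - e) - v e k (e+1))^2 = (v e k (e+1) - v e k (k - e))^2 from by ring]
      exact hδ
    nlinarith [h2, hpair, hδ, hδ', hv0]

lemma a_top (e : ℕ) : a (e+2) (2*e) = 1 := by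
  rcases Nat.eq_zero_or_pos e with rfl | he
  · simpa using a_zero 0
  have h2 := two_a e (2*e)
  have hv0 : v e (2*e) 0 = 0 := v_of_far (by omega)
  have hsum : ∑ i ∈ Icc 1 (2*e), (v e (2*e) i - v e (2*e) (2*e+1-i))^2
      = ∑ i ∈ ({e, e + 1} : Finset ℕ), (v e (2*e) i - v e (2*e) (2*e+1-i))^2 := by
    refine (Finset.sum_subset ?_ ?_).symm
    · intro x hx
      simp only [Finset.mem_insert, Finset.mem_singleton] at hx
      rcases hx with rfl | rfl <;> simp only [Finset.mem_Icc] <;> omega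
    · intro x hx hx'
      simp only [Finset.mem_Icc] at hx
      simp only [Finset.mem_insert, Finset.mem_singleton] at hx'
      have hx1 : x ≠ e := fun h => hx' (Or.inl h)
      have hx2 : x ≠ e + 1 := fun h => hx' (Or.inr h)
      have hvx : v e (2*e) x = 0 := by
        rcases (by omega : x < e ∨ e + 1 < x) with h | h
        · exact v_of_far (by omega)
        · exact v_of_big (by omega)
      have hvy : v e (2*e) (2*e+1-x) = 0 := by
        rcases Nat.lt_or_ge x e with h | h
        · exact v_of_big (by omega)
        · exact v_of_far (by omega)
      rw [hvx, hvy]; ring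
  have hval1 : v e (2*e) e = ((e:ℝ) + 1) := by
    rw [v_of_le (by omega), show 2*e - e = e from by omega, Nat.choose_self,
      Nat.choose_succ_self_right]
    push_cast; ring
  have hval2 : v e (2*e) (e+1) = (e:ℝ) := by
    obtain ⟨s, rfl⟩ : ∃ s, e = s + 1 := ⟨e - 1, by omega⟩
    rw [v_of_le (by omega), Nat.choose_self,
      show 2*(s+1) - (s+1+1) = s from by omega, Nat.choose_succ_self_right]
    push_cast; ring
  rw [hsum, Finset.sum_pair (by omega : e ≠ e + 1),
    show 2*e + 1 - e = e + 1 from by omega,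
    show 2*e + 1 - (e+1) = e from by omega, hval1, hval2] at h2
  nlinarith [h2]

end Stmt2Aux

theorem stmt_2 (d : ℕ) (hd : 2 ≤ d) :
    a d 0 = 1 ∧ a d (2 * d - 4) = 1 ∧ ∀ k : ℕ, k ≤ 2 * d - 4 → 1 ≤ a d k := by
  obtain ⟨e, rfl⟩ : ∃ e, d = e + 2 := ⟨d - 2, by omega⟩
  refine ⟨Stmt2Aux.a_zero e, ?_, ?_⟩
  · rw [show 2 * (e + 2) - 4 = 2 * e from by omega]
    exact Stmt2Aux.a_top e
  · intro k hk
    exact Stmt2Aux.a_ge e k (by omega)
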